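/- Under the assumptions of the previous statement (local quadratic growth with constants σ', R' on the set dist(y,Y*) ≤ R'), the quadratic growth property holds on the sublevel set {y : d(y) ≤ d* + σ'(R')²/2}: for all y with d(y) − d* ≤ σ'(R')²/2 one has d(y) − d* ≥ (σ'/2)·dist(y,Y*)². -/

import Mathlib

open Metric

theorem quadratic_growth_on_sublevel_set
    (N : ℕ)
    (d : EuclideanSpace ℝ (Fin N) → ℝ)
    (hconv : ConvexOn ℝ Set.univ d)
    (Ystar : Set (EuclideanSpace ℝ (Fin N)))
    (hYne : Ystar.Nonempty) (hYclosed : IsClosed Ystar) (hYconv : Convex ℝ Ystar)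
    (dstar : ℝ)
    (hopt : ∀ z ∈ Ystar, d z = dstar)
    (hmin : ∀ y, dstar ≤ d y)
    (σ' R' : ℝ) (hσ : 0 < σ') (hR : 0 < R')
    (hlocal : ∀ y, infDist y Ystar ≤ R' →
      d y - dstar ≥ σ' / 2 * (infDist y Ystar)^2) :
    ∀ y, d y - dstar ≤ σ' * R'^2 / 2 →
      d y - dstar ≥ σ' / 2 * (infDist y Ystar)^2 := by
  intro y hy
  by_cases hD : infDist y Ystar ≤ R'
  · exact hlocal y hD
  · exfalso
    push_neg at hD
    set D := infDist y Ystar with hDdef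
    have hDpos : 0 < D := lt_trans hR hD
    obtain ⟨z, hz, hzd⟩ := hYclosed.exists_infDist_eq_dist hYne y
    have hdyz : dist y z = D := hzd.symm
    set t : ℝ := R' / D with htdef
    have ht0 : 0 < t := div_pos hR hDpos
    have ht1 : t < 1 := (div_lt_one hDpos).mpr hD
    have htD : t * D = R' := by rw [htdef]; exact div_mul_cancel₀ R' hDpos.ne'
    set w : EuclideanSpace ℝ (Fin N) := (1 - t) • z + t • y with hwdef
    have hwz : w - z = t • (y - z) := by
      simp only [hwdef]; module
    have hyw : y - w = (1 - t) • (y - z) := by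
      simp only [hwdef]; module
    have hdistwz : dist w z = t * D := by
      rw [dist_eq_norm, hwz, norm_smul, Real.norm_eq_abs, abs_of_pos ht0,
        ← dist_eq_norm, hdyz]
    have hdistyw : dist y w = (1 - t) * D := by
      rw [dist_eq_norm, hyw, norm_smul, Real.norm_eq_abs,
        abs_of_pos (by linarith : (0:ℝ) < 1 - t), ← dist_eq_norm, hdyz]
    have hle : infDist w Ystar ≤ R' := by
      calc infDist w Ystar ≤ dist w z := infDist_le_dist_of_mem hz
        _ = R' := by rw [hdistwz, htD]
    have hge : R' ≤ infDist w Ystar := by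
      have := infDist_le_infDist_add_dist (x := y) (y := w) (s := Ystar)
      rw [hdistyw] at this
      have : D - (1 - t) * D ≤ infDist w Ystar := by
        linarith [this, hDdef]
      calc R' = t * D := htD.symm
        _ = D - (1 - t) * D := by ring
        _ ≤ _ := this
    have hinfw : infDist w Ystar = R' := le_antisymm hle hge
    have hlw := hlocal w hle
    rw [hinfw] at hlw
    have hconvw : d w ≤ (1 - t) * d z + t * d y :=
      hconv.2 (Set.mem_univ z) (Set.mem_univ y) (by linarith) (le_of_lt ht0)
        (by ring)
    rw [hopt z hz] at hconvw
    -- from hlw : d w - dstar ≥ σ'/2 * R'^2 and hconvw : d w ≤ (1-t)*dstar + t*(d y)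
    have key : t * (d y - dstar) ≥ σ' / 2 * R' ^ 2 := by nlinarith [hlw, hconvw]
    -- d y - dstar ≥ σ'*R'*D/2 > σ'*R'^2/2
    have hdy : d y - dstar ≥ σ' * R' * D / 2 := by
      have h1 : t * (d y - dstar) ≥ σ' / 2 * R' ^ 2 := key
      have h2 : d y - dstar ≥ (σ' / 2 * R' ^ 2) / t := by
        rw [ge_iff_le, div_le_iff₀ ht0]; linarith [h1]
      have h3 : (σ' / 2 * R' ^ 2) / t = σ' * R' * D / 2 := by
        rw [htdef]; field_simp
      linarith [h2, h3.symm.le]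
    nlinarith [hdy, hy, mul_pos (mul_pos hσ hR) (sub_pos.mpr hD)]
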